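/- (Binding-constraint Case 1 of OP_DES via KKT.) Suppose λ is a real number with 0 < λ < p_e and λ < p_h, and set α◇ = (1/X)·(k_e/(p_e − λ) − 1/b_e) and β◇ = (1/Y)·(k_h/(p_h − λ) − 1/b_h). If 0 < α◇ < 1, 0 < β◇ < 1, and X·α◇ + Y·β◇ = M_min, then (α◇, β◇) is a global maximizer of U on the feasible set D: U(α◇, β◇) ≥ U(α,β) for all (α,β) ∈ D. -/

import Mathlib

/-- The DES utility function `U(α,β)` with adaption coefficients
`b_e = (e−1)/X`, `b_h = (e−1)/Y`. -/
noncomputable def desU (X Y ke kh pe ph C0 : ℝ) (q : ℝ × ℝ) : ℝ :=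
  ke * Real.log (1 + ((Real.exp 1 - 1) / X) * X * q.1)
  + kh * Real.log (1 + ((Real.exp 1 - 1) / Y) * Y * q.2)
  + pe * X * (1 - q.1) + ph * Y * (1 - q.2) - C0

/-- The feasible set `D` of the DES optimization problem. -/
def desD (X Y Mmin : ℝ) : Set (ℝ × ℝ) :=
  {q | q.1 ∈ Set.Icc (0:ℝ) 1 ∧ q.2 ∈ Set.Icc (0:ℝ) 1 ∧ X * q.1 + Y * q.2 ≥ Mmin}

/-- Binding-constraint Case 1 of OP_DES via KKT: with a positive multiplier
`λ < p_e, p_h`, an interior KKT point `(α◇, β◇)` on the binding constraint is a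
global maximizer of `U` on `D`. -/
theorem stmt_9 (X Y ke kh pe ph C0 Mmin lam αd βd : ℝ)
    (hX : 0 < X) (hY : 0 < Y) (hke : 0 < ke) (hkh : 0 < kh)
    (hpe : 0 < pe) (hph : 0 < ph)
    (hM : max X Y < Mmin) (hM' : Mmin < X + Y)
    (hlam0 : 0 < lam) (hlam1 : lam < pe) (hlam2 : lam < ph)
    (hαd : αd = (1 / X) * (ke / (pe - lam) - 1 / ((Real.exp 1 - 1) / X)))
    (hβd : βd = (1 / Y) * (kh / (ph - lam) - 1 / ((Real.exp 1 - 1) / Y)))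
    (hα1 : 0 < αd) (hα2 : αd < 1) (hβ1 : 0 < βd) (hβ2 : βd < 1)
    (hbind : X * αd + Y * βd = Mmin) :
    ∀ q ∈ desD X Y Mmin,
      desU X Y ke kh pe ph C0 q ≤ desU X Y ke kh pe ph C0 (αd, βd) := by
  have hE : 0 < Real.exp 1 - 1 := by
    have := Real.exp_one_gt_d9; linarith
  set E : ℝ := Real.exp 1 - 1 with hEdef
  have hpe' : 0 < pe - lam := by linarith
  have hph' : 0 < ph - lam := by linarith
  have hEX : E / X * X = E := div_mul_cancel₀ _ hX.ne'
  have hEY : E / Y * Y = E := div_mul_cancel₀ _ hY.ne'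
  -- KKT stationarity identities
  have hse : 1 + E * αd = E * ke / (X * (pe - lam)) := by
    rw [hαd]; field_simp; ring
  have hsh : 1 + E * βd = E * kh / (Y * (ph - lam)) := by
    rw [hβd]; field_simp; ring
  have hse_pos : 0 < 1 + E * αd := by have := mul_pos hE hα1; linarith
  have hsh_pos : 0 < 1 + E * βd := by have := mul_pos hE hβ1; linarith
  rintro ⟨α, β⟩ ⟨⟨hα0, hα1'⟩, ⟨hβ0, hβ1'⟩, hcon⟩
  have hte : 0 < 1 + E * α := by have := mul_nonneg hE.le hα0; linarith
  have hth : 0 < 1 + E * β := by have := mul_nonneg hE.le hβ0; linarith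
  -- concavity (gradient) inequality for log
  have key_e : ke * (Real.log (1 + E * α) - Real.log (1 + E * αd))
      ≤ X * (pe - lam) * (α - αd) := by
    have h := Real.log_le_sub_one_of_pos (div_pos hte hse_pos)
    rw [Real.log_div hte.ne' hse_pos.ne'] at h
    have h2 : (1 + E * α) / (1 + E * αd) - 1 = E * (α - αd) / (1 + E * αd) := by
      field_simp; ring
    rw [h2] at h
    have h3 : ke * (E * (α - αd) / (1 + E * αd)) = X * (pe - lam) * (α - αd) := by
      rw [hse]
      field_simp
    calc ke * (Real.log (1 + E * α) - Real.log (1 + E * αd))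
        ≤ ke * (E * (α - αd) / (1 + E * αd)) := by
          exact mul_le_mul_of_nonneg_left h hke.le
      _ = X * (pe - lam) * (α - αd) := h3
  have key_h : kh * (Real.log (1 + E * β) - Real.log (1 + E * βd))
      ≤ Y * (ph - lam) * (β - βd) := by
    have h := Real.log_le_sub_one_of_pos (div_pos hth hsh_pos)
    rw [Real.log_div hth.ne' hsh_pos.ne'] at h
    have h2 : (1 + E * β) / (1 + E * βd) - 1 = E * (β - βd) / (1 + E * βd) := by
      field_simp; ring
    rw [h2] at h
    have h3 : kh * (E * (β - βd) / (1 + E * βd)) = Y * (ph - lam) * (β - βd) := by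
      rw [hsh]
      field_simp
    calc kh * (Real.log (1 + E * β) - Real.log (1 + E * βd))
        ≤ kh * (E * (β - βd) / (1 + E * βd)) := by
          exact mul_le_mul_of_nonneg_left h hkh.le
      _ = Y * (ph - lam) * (β - βd) := h3
  have hslack : 0 ≤ lam * (X * α + Y * β - Mmin) :=
    mul_nonneg hlam0.le (by linarith [hcon])
  have hfinal : X * (pe - lam) * (α - αd) + Y * (ph - lam) * (β - βd)
      - pe * X * (α - αd) - ph * Y * (β - βd)
      = -(lam * (X * α + Y * β - Mmin)) := by
    rw [← hbind]; ring
  simp only [desU, ← hEdef, hEX, hEY]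
  linarith [key_e, key_h, hslack, hfinal]
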